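/- Let μ be real and σ > 0, and let X12, X23, X13 be real random variables on a probability space such that X13 is distributed as N(μ, σ^2), X12 + X23 is distributed as N(2μ, 2.27σ^2), X23 − X12 and X12 − X23 are each distributed as N(0, 1.73σ^2), and X13 is independent of X12 + X23, of X23 − X12, and of X12 − X23. Then the probability that the triangle is broken satisfies P({X12 + X23 < X13} ∪ {X12 + X13 < X23} ∪ {X13 + X23 < X12}) ≤ 2·Φ(−μ/(√2.73 · σ)) + Φ(−μ/(√3.27 · σ)). -/

import Mathlib

open MeasureTheory ProbabilityTheory Real
open scoped NNReal ENNReal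

namespace BT

lemma conv_pdfReal (m1 m2 : ℝ) {v1 v2 : ℝ≥0} (h1 : v1 ≠ 0) (h2 : v2 ≠ 0) (z : ℝ) :
    ∫ x, gaussianPDFReal m1 v1 x * gaussianPDFReal m2 v2 (z - x)
      = gaussianPDFReal (m1 + m2) (v1 + v2) z := by
  have ha : (0:ℝ) < v1 := lt_of_le_of_ne v1.2 (by exact_mod_cast (Ne.symm h1))
  have hb : (0:ℝ) < v2 := lt_of_le_of_ne v2.2 (by exact_mod_cast (Ne.symm h2))
  set a : ℝ := (v1 : ℝ) with haa
  set b : ℝ := (v2 : ℝ) with hbb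
  set A : ℝ := (a + b) / (2 * a * b) with hA
  set B : ℝ := m1 + a * (z - m1 - m2) / (a + b) with hB
  have hApos : 0 < A := by positivity
  have hsq : (0:ℝ) < Real.sqrt (π / A) := Real.sqrt_pos.mpr (by positivity)
  set K : ℝ := gaussianPDFReal (m1 + m2) (v1 + v2) z / Real.sqrt (π / A) with hK
  have hpoint : ∀ x, gaussianPDFReal m1 v1 x * gaussianPDFReal m2 v2 (z - x)
      = K * rexp (-A * (x - B) ^ 2) := by
    intro x
    rw [hK, div_mul_eq_mul_div, eq_div_iff (ne_of_gt hsq)]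
    simp only [gaussianPDFReal, NNReal.coe_add]
    have hconst : (Real.sqrt (2 * π * a))⁻¹ * (Real.sqrt (2 * π * b))⁻¹
        * Real.sqrt (π / A) = (Real.sqrt (2 * π * (a + b)))⁻¹ := by
      rw [← mul_inv, ← Real.sqrt_mul (by positivity)]
      rw [← Real.sqrt_inv, ← Real.sqrt_mul (by positivity), ← Real.sqrt_inv]
      congr 1
      rw [hA]
      field_simp
    have hexp : rexp (-(x - m1) ^ 2 / (2 * a)) * rexp (-(z - x - m2) ^ 2 / (2 * b))
        = rexp (-(z - (m1 + m2)) ^ 2 / (2 * (a + b))) * rexp (-A * (x - B) ^ 2) := by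
      rw [← Real.exp_add, ← Real.exp_add]
      congr 1
      rw [hA, hB]
      field_simp
      ring
    have hsplit : (Real.sqrt (2 * π * a))⁻¹ * rexp (-(x - m1) ^ 2 / (2 * a))
          * ((Real.sqrt (2 * π * b))⁻¹ * rexp (-(z - x - m2) ^ 2 / (2 * b)))
          * Real.sqrt (π / A)
        = ((Real.sqrt (2 * π * a))⁻¹ * (Real.sqrt (2 * π * b))⁻¹ * Real.sqrt (π / A))
            * (rexp (-(x - m1) ^ 2 / (2 * a)) * rexp (-(z - x - m2) ^ 2 / (2 * b))) := by
      ring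
    rw [hsplit, hconst, hexp]
    ring
  simp_rw [hpoint]
  rw [integral_const_mul]
  rw [integral_sub_right_eq_self (fun x => rexp (-A * x ^ 2)) B]
  rw [integral_gaussian A, hK, div_mul_cancel₀ _ (ne_of_gt hsq)]

end BT

namespace BT2
open BT Set
lemma gaussianPDFReal_le (m : ℝ) (v : ℝ≥0) (x : ℝ) :
    gaussianPDFReal m v x ≤ (Real.sqrt (2 * π * v))⁻¹ := by
  rw [gaussianPDFReal]
  have h1 : rexp (-(x - m) ^ 2 / (2 * v)) ≤ 1 := by
    rw [Real.exp_le_one_iff]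
    by_cases hv : (v:ℝ) = 0
    · simp [hv]
    · have : (0:ℝ) < v := lt_of_le_of_ne v.2 (Ne.symm hv)
      apply div_nonpos_of_nonpos_of_nonneg
      · exact neg_nonpos.mpr (sq_nonneg _)
      · positivity
  calc (Real.sqrt (2 * π * v))⁻¹ * rexp (-(x - m) ^ 2 / (2 * v))
      ≤ (Real.sqrt (2 * π * v))⁻¹ * 1 := by
        apply mul_le_mul_of_nonneg_left h1 (by positivity)
    _ = _ := mul_one _

lemma conv_pdf (m1 m2 : ℝ) {v1 v2 : ℝ≥0} (h1 : v1 ≠ 0) (h2 : v2 ≠ 0) (z : ℝ) :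
    ∫⁻ x, gaussianPDF m1 v1 x * gaussianPDF m2 v2 (z - x)
      = gaussianPDF (m1 + m2) (v1 + v2) z := by
  have hnn : ∀ x, 0 ≤ gaussianPDFReal m1 v1 x * gaussianPDFReal m2 v2 (z - x) :=
    fun x => mul_nonneg (gaussianPDFReal_nonneg _ _ _) (gaussianPDFReal_nonneg _ _ _)
  have hint : Integrable (fun x => gaussianPDFReal m1 v1 x * gaussianPDFReal m2 v2 (z - x)) := by
    refine Integrable.mono ((integrable_gaussianPDFReal m1 v1).const_mul
      (Real.sqrt (2 * π * v2))⁻¹) ?_ (ae_of_all _ fun x => ?_)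
    · exact ((measurable_gaussianPDFReal m1 v1).mul
        ((measurable_gaussianPDFReal m2 v2).comp (measurable_const.sub measurable_id))).aestronglyMeasurable
    · rw [Real.norm_eq_abs, Real.norm_eq_abs, abs_of_nonneg (hnn x),
        abs_of_nonneg (mul_nonneg (inv_nonneg.mpr (Real.sqrt_nonneg _))
          (gaussianPDFReal_nonneg _ _ _)), mul_comm ((Real.sqrt (2 * π * ↑v2))⁻¹)]
      exact mul_le_mul_of_nonneg_left (gaussianPDFReal_le m2 v2 (z - x))
        (gaussianPDFReal_nonneg _ _ _)
  simp only [gaussianPDF]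
  simp_rw [← ENNReal.ofReal_mul (gaussianPDFReal_nonneg m1 v1 _)]
  rw [← ofReal_integral_eq_lintegral_ofReal hint (ae_of_all _ hnn),
    conv_pdfReal m1 m2 h1 h2 z]

end BT2

namespace BT3
open BT BT2 Set

lemma gaussian_prod_add (m1 m2 : ℝ) {v1 v2 : ℝ≥0} (h1 : v1 ≠ 0) (h2 : v2 ≠ 0) :
    ((gaussianReal m1 v1).prod (gaussianReal m2 v2)).map (fun p : ℝ × ℝ => p.1 + p.2)
      = gaussianReal (m1 + m2) (v1 + v2) := by
  have h12 : v1 + v2 ≠ 0 := fun h => h1 (by simpa using (add_eq_zero.mp h).1)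
  ext s hs
  rw [Measure.map_apply measurable_add hs, Measure.prod_apply (measurable_add hs)]
  have hpre : ∀ x : ℝ, (Prod.mk x ⁻¹' ((fun p : ℝ × ℝ => p.1 + p.2) ⁻¹' s))
      = (fun y => x + y) ⁻¹' s := fun x => rfl
  have hms : ∀ x : ℝ, MeasurableSet ((fun y : ℝ => x + y) ⁻¹' s) :=
    fun x => (measurable_const_add x) hs
  have hinner : ∀ x : ℝ, gaussianReal m2 v2 ((fun y => x + y) ⁻¹' s)
      = ∫⁻ y, s.indicator (fun _ => (1 : ℝ≥0∞)) (x + y) * gaussianPDF m2 v2 y := by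
    intro x
    rw [gaussianReal_of_var_ne_zero _ h2, withDensity_apply _ (hms x),
      ← lintegral_indicator (hms x) _]
    congr 1; ext y
    by_cases hy : x + y ∈ s <;> simp [Set.indicator, hy]
  simp_rw [hpre, hinner]
  have hF : Measurable fun q : ℝ × ℝ =>
      s.indicator (fun _ => (1 : ℝ≥0∞)) (q.1 + q.2) * gaussianPDF m2 v2 q.2 :=
    ((measurable_const.indicator hs).comp (measurable_fst.add measurable_snd)).mul
      ((measurable_gaussianPDF _ _).comp measurable_snd)
  have hmeasg : Measurable fun x : ℝ =>
      ∫⁻ y, s.indicator (fun _ => (1 : ℝ≥0∞)) (x + y) * gaussianPDF m2 v2 y :=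
    hF.lintegral_prod_right'
  rw [gaussianReal_of_var_ne_zero _ h1,
    lintegral_withDensity_eq_lintegral_mul _ (measurable_gaussianPDF _ _) hmeasg]
  simp only [Pi.mul_apply]
  calc ∫⁻ x, gaussianPDF m1 v1 x
        * ∫⁻ y, s.indicator (fun _ => (1 : ℝ≥0∞)) (x + y) * gaussianPDF m2 v2 y
      = ∫⁻ x, ∫⁻ z, s.indicator (fun _ => (1 : ℝ≥0∞)) z
          * (gaussianPDF m1 v1 x * gaussianPDF m2 v2 (z - x)) := by
        refine lintegral_congr fun x => ?_
        have hmx : Measurable fun y : ℝ =>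
            s.indicator (fun _ => (1 : ℝ≥0∞)) (x + y) * gaussianPDF m2 v2 y :=
          ((measurable_const.indicator hs).comp (measurable_const_add x)).mul
            (measurable_gaussianPDF _ _)
        rw [← lintegral_const_mul _ hmx]
        rw [← lintegral_add_right_eq_self (fun z => s.indicator (fun _ => (1 : ℝ≥0∞)) z
          * (gaussianPDF m1 v1 x * gaussianPDF m2 v2 (z - x))) x]
        refine lintegral_congr fun y => ?_
        simp only [add_sub_cancel_right]
        rw [add_comm y x]
        ring
    _ = ∫⁻ z, ∫⁻ x, s.indicator (fun _ => (1 : ℝ≥0∞)) z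
          * (gaussianPDF m1 v1 x * gaussianPDF m2 v2 (z - x)) := by
        refine lintegral_lintegral_swap ?_
        exact (((measurable_const.indicator hs).comp measurable_snd).mul
          (((measurable_gaussianPDF _ _).comp measurable_fst).mul
            ((measurable_gaussianPDF _ _).comp (measurable_snd.sub measurable_fst)))).aemeasurable
    _ = ∫⁻ z, s.indicator (fun _ => (1 : ℝ≥0∞)) z * gaussianPDF (m1 + m2) (v1 + v2) z := by
        refine lintegral_congr fun z => ?_
        have hmz : Measurable fun x : ℝ =>
            gaussianPDF m1 v1 x * gaussianPDF m2 v2 (z - x) :=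
          (measurable_gaussianPDF _ _).mul
            ((measurable_gaussianPDF _ _).comp (measurable_const.sub measurable_id))
        rw [lintegral_const_mul _ hmz]
        rw [conv_pdf m1 m2 h1 h2 z]
    _ = gaussianReal (m1 + m2) (v1 + v2) s := by
        rw [gaussianReal_of_var_ne_zero _ h12, withDensity_apply _ hs,
          ← lintegral_indicator hs _]
        refine lintegral_congr fun z => ?_
        by_cases hz : z ∈ s <;> simp [Set.indicator, hz]

end BT3

namespace BT4
open BT BT2 BT3 Set

variable {Ω : Type*} [MeasureSpace Ω] [IsProbabilityMeasure (ℙ : Measure Ω)]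

lemma map_add_of_indep {X Y : Ω → ℝ} {m1 m2 : ℝ} {v1 v2 : ℝ≥0} (h1v : v1 ≠ 0) (h2v : v2 ≠ 0)
    (h1 : Measure.map X ℙ = gaussianReal m1 v1) (h2 : Measure.map Y ℙ = gaussianReal m2 v2)
    (hind : IndepFun X Y ℙ) :
    Measure.map (fun ω => X ω + Y ω) ℙ = gaussianReal (m1 + m2) (v1 + v2) := by
  have hX : AEMeasurable X ℙ := aemeasurable_of_map_neZero (by rw [h1]; infer_instance)
  have hY : AEMeasurable Y ℙ := aemeasurable_of_map_neZero (by rw [h2]; infer_instance)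
  have hprod := (ProbabilityTheory.indepFun_iff_map_prod_eq_prod_map_map hX hY).mp hind
  have : (fun ω => X ω + Y ω) = (fun p : ℝ × ℝ => p.1 + p.2) ∘ fun ω => (X ω, Y ω) := rfl
  rw [this, ← AEMeasurable.map_map_of_aemeasurable measurable_add.aemeasurable (hX.prodMk hY),
    hprod, h1, h2, gaussian_prod_add _ _ h1v h2v]

lemma map_sub_of_indep {X Y : Ω → ℝ} {m1 m2 : ℝ} {v1 v2 : ℝ≥0} (h1v : v1 ≠ 0) (h2v : v2 ≠ 0)
    (h1 : Measure.map X ℙ = gaussianReal m1 v1) (h2 : Measure.map Y ℙ = gaussianReal m2 v2)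
    (hind : IndepFun X Y ℙ) :
    Measure.map (fun ω => X ω - Y ω) ℙ = gaussianReal (m1 - m2) (v1 + v2) := by
  have hY : AEMeasurable Y ℙ := aemeasurable_of_map_neZero (by rw [h2]; infer_instance)
  have hnegY : Measure.map (fun ω => -(Y ω)) ℙ = gaussianReal (-m2) v2 := by
    have : (fun ω => -(Y ω)) = (fun x : ℝ => -1 * x) ∘ Y := by ext ω; simp
    rw [this, ← AEMeasurable.map_map_of_aemeasurable
      (show Measurable fun x : ℝ => -1 * x by fun_prop).aemeasurable hY, h2,
      gaussianReal_map_const_mul (-1)]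
    have hco : (⟨(-1:ℝ)^2, sq_nonneg _⟩ : NNReal) = 1 := by ext; norm_num
    congr 1
    · ring
    · ext; simp
  have hindneg : IndepFun X (fun ω => -(Y ω)) ℙ := hind.comp measurable_id measurable_neg
  have := map_add_of_indep h1v h2v h1 hnegY hindneg
  simp only [← sub_eq_add_neg] at this
  exact this

lemma gaussian_Iio_toReal (m : ℝ) {v : ℝ≥0} (hv : v ≠ 0) :
    (gaussianReal m v (Set.Iio 0)).toReal
      = cdf (gaussianReal 0 1) (-m / Real.sqrt v) := by
  have hv' : (0:ℝ) < v := lt_of_le_of_ne v.2 (by exact_mod_cast (Ne.symm hv))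
  have hsv : (0:ℝ) < Real.sqrt v := Real.sqrt_pos.mpr hv'
  rw [ProbabilityTheory.cdf_eq_real, measureReal_def]
  congr 1
  have hmap : (gaussianReal 0 1).map (fun x => Real.sqrt v * x + m) = gaussianReal m v := by
    have h1 : (gaussianReal 0 1).map (fun x => Real.sqrt v * x) = gaussianReal 0 v := by
      rw [gaussianReal_map_const_mul (Real.sqrt v)]
      have hco : (⟨(Real.sqrt v)^2, sq_nonneg _⟩ : NNReal) = v := by
        ext; simp [Real.sq_sqrt hv'.le]
      congr 1
      · ring
      · ext; simp [Real.sq_sqrt hv'.le]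
    have : (fun x : ℝ => Real.sqrt v * x + m) = (fun x => x + m) ∘ (fun x => Real.sqrt v * x) :=
      rfl
    rw [this, ← Measure.map_map (show Measurable fun x : ℝ => x + m by fun_prop)
      (show Measurable fun x : ℝ => Real.sqrt v * x by fun_prop), h1,
      gaussianReal_map_add_const m, zero_add]
  rw [← hmap, Measure.map_apply (by fun_prop) measurableSet_Iio]
  have hset : (fun x : ℝ => Real.sqrt v * x + m) ⁻¹' (Set.Iio 0)
      = Set.Iio (-m / Real.sqrt v) := by
    ext x
    simp only [Set.mem_preimage, Set.mem_Iio]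
    rw [lt_div_iff₀ hsv]
    constructor <;> intro h <;> nlinarith
  rw [hset]
  have hsing : gaussianReal 0 1 {(-m / Real.sqrt v)} = 0 :=
    gaussianReal_absolutelyContinuous 0 one_ne_zero (measure_singleton _)
  refine le_antisymm (measure_mono Set.Iio_subset_Iic_self) ?_
  rw [← Set.Iio_union_right]
  exact le_trans (measure_union_le _ _) (by rw [hsing, add_zero])

lemma prob_lt_of_indep {X Y : Ω → ℝ} {m1 m2 : ℝ} {v1 v2 : ℝ≥0} (h1v : v1 ≠ 0) (h2v : v2 ≠ 0)
    (h1 : Measure.map X ℙ = gaussianReal m1 v1) (h2 : Measure.map Y ℙ = gaussianReal m2 v2)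
    (hind : IndepFun X Y ℙ) :
    (ℙ {ω | X ω < Y ω}).toReal
      = cdf (gaussianReal 0 1) ((m2 - m1) / Real.sqrt (↑(v1 + v2))) := by
  have hZ := map_sub_of_indep h1v h2v h1 h2 hind
  have h12 : v1 + v2 ≠ 0 := fun h => h1v (by simpa using (add_eq_zero.mp h).1)
  have hZae : AEMeasurable (fun ω => X ω - Y ω) ℙ :=
    aemeasurable_of_map_neZero (by rw [hZ]; infer_instance)
  have hset : {ω | X ω < Y ω} = (fun ω => X ω - Y ω) ⁻¹' (Set.Iio 0) := by
    ext ω; simp [sub_neg]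
  rw [hset, ← Measure.map_apply_of_aemeasurable hZae measurableSet_Iio, hZ,
    gaussian_Iio_toReal _ h12]
  congr 2
  ring

end BT4

/-- Under the Gaussian model for the three triangle edges (without assuming the
three broken events are disjoint), the probability that the triangle is broken
is at most `2Φ(-μ/(√2.73 σ)) + Φ(-μ/(√3.27 σ))`. -/
theorem broken_triangle_probability_le {Ω : Type*} [MeasureSpace Ω]
    [IsProbabilityMeasure (ℙ : Measure Ω)]
    (μ σ : ℝ) (hσ : 0 < σ) (X12 X23 X13 : Ω → ℝ)
    (h13 : Measure.map X13 ℙ = gaussianReal μ (σ ^ 2).toNNReal)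
    (hsum : Measure.map (fun ω => X12 ω + X23 ω) ℙ
      = gaussianReal (2 * μ) (2.27 * σ ^ 2).toNNReal)
    (hdiff1 : Measure.map (fun ω => X23 ω - X12 ω) ℙ
      = gaussianReal 0 (1.73 * σ ^ 2).toNNReal)
    (hdiff2 : Measure.map (fun ω => X12 ω - X23 ω) ℙ
      = gaussianReal 0 (1.73 * σ ^ 2).toNNReal)
    (hind1 : IndepFun X13 (fun ω => X12 ω + X23 ω) ℙ)
    (hind2 : IndepFun X13 (fun ω => X23 ω - X12 ω) ℙ)
    (hind3 : IndepFun X13 (fun ω => X12 ω - X23 ω) ℙ) :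
    (ℙ ({ω | X12 ω + X23 ω < X13 ω} ∪ {ω | X12 ω + X13 ω < X23 ω}
        ∪ {ω | X13 ω + X23 ω < X12 ω})).toReal
      ≤ 2 * cdf (gaussianReal 0 1) (-μ / (Real.sqrt 2.73 * σ))
        + cdf (gaussianReal 0 1) (-μ / (Real.sqrt 3.27 * σ)) := by
  have hσ2 : (σ ^ 2).toNNReal ≠ 0 := ne_of_gt (Real.toNNReal_pos.mpr (by positivity))
  have hv227 : (2.27 * σ ^ 2).toNNReal ≠ 0 := ne_of_gt (Real.toNNReal_pos.mpr (by positivity))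
  have hv173 : (1.73 * σ ^ 2).toNNReal ≠ 0 := ne_of_gt (Real.toNNReal_pos.mpr (by positivity))
  set A := {ω | X12 ω + X23 ω < X13 ω} with hA_def
  set B := {ω | X12 ω + X13 ω < X23 ω} with hB_def
  set C := {ω | X13 ω + X23 ω < X12 ω} with hC_def
  have hA : (ℙ A).toReal = cdf (gaussianReal 0 1) (-μ / (Real.sqrt 3.27 * σ)) := by
    rw [hA_def, BT4.prob_lt_of_indep hv227 hσ2 hsum h13 hind1.symm]
    congr 1
    rw [NNReal.coe_add, Real.coe_toNNReal _ (by positivity), Real.coe_toNNReal _ (by positivity),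
      show (2.27 * σ ^ 2 + σ ^ 2 : ℝ) = 3.27 * σ ^ 2 by ring,
      Real.sqrt_mul (by norm_num) (σ ^ 2), Real.sqrt_sq hσ.le]
    ring
  have hB : (ℙ B).toReal = cdf (gaussianReal 0 1) (-μ / (Real.sqrt 2.73 * σ)) := by
    have hBeq : B = {ω | X13 ω < X23 ω - X12 ω} := by
      ext ω
      simp only [hB_def, Set.mem_setOf_eq]
      constructor <;> intro h <;> linarith
    rw [hBeq, BT4.prob_lt_of_indep hσ2 hv173 h13 hdiff1 hind2]
    congr 1
    rw [NNReal.coe_add, Real.coe_toNNReal _ (by positivity), Real.coe_toNNReal _ (by positivity),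
      show (σ ^ 2 + 1.73 * σ ^ 2 : ℝ) = 2.73 * σ ^ 2 by ring,
      Real.sqrt_mul (by norm_num) (σ ^ 2), Real.sqrt_sq hσ.le]
    ring
  have hC : (ℙ C).toReal = cdf (gaussianReal 0 1) (-μ / (Real.sqrt 2.73 * σ)) := by
    have hCeq : C = {ω | X13 ω < X12 ω - X23 ω} := by
      ext ω
      simp only [hC_def, Set.mem_setOf_eq]
      constructor <;> intro h <;> linarith
    rw [hCeq, BT4.prob_lt_of_indep hσ2 hv173 h13 hdiff2 hind3]
    congr 1
    rw [NNReal.coe_add, Real.coe_toNNReal _ (by positivity), Real.coe_toNNReal _ (by positivity),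
      show (σ ^ 2 + 1.73 * σ ^ 2 : ℝ) = 2.73 * σ ^ 2 by ring,
      Real.sqrt_mul (by norm_num) (σ ^ 2), Real.sqrt_sq hσ.le]
    ring
  have hle : ℙ (A ∪ B ∪ C) ≤ ℙ A + ℙ B + ℙ C :=
    le_trans (measure_union_le _ _) (add_le_add_left (measure_union_le _ _) _)
  have htr : (ℙ (A ∪ B ∪ C)).toReal ≤ (ℙ A + ℙ B + ℙ C).toReal := by
    refine ENNReal.toReal_mono ?_ hle
    exact ENNReal.add_ne_top.mpr ⟨ENNReal.add_ne_top.mpr ⟨measure_ne_top _ _, measure_ne_top _ _⟩,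
      measure_ne_top _ _⟩
  rw [ENNReal.toReal_add (ENNReal.add_ne_top.mpr ⟨measure_ne_top _ _, measure_ne_top _ _⟩)
    (measure_ne_top _ _), ENNReal.toReal_add (measure_ne_top _ _) (measure_ne_top _ _),
    hA, hB, hC] at htr
  linarith
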